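/- Let D ≥ 1 and let (ρ^N)_{N≥1}, ρ be probability measures on [0,1]^D with ‖ρ^N − ρ‖_E → 0 as N → ∞, where ρ is absolutely continuous with respect to Lebesgue measure with a bounded density. Let G : [0,1]^D → [0,∞) be continuous and bounded with ρ(G) = ∫ G dρ > 0. Then ρ^N(G) > 0 for all N large enough, and the self-normalized reweighted measures ν^N(dx) = G(x) ρ^N(dx) / ρ^N(G) converge in extreme norm to ν(dx) = G(x) ρ(dx) / ρ(G), i.e. ‖ν^N − ν‖_E → 0 as N → ∞. -/

import Mathlib

open MeasureTheory ProbabilityTheory Filter Set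
open scoped ENNReal NNReal

noncomputable section

/-- The closed unit cube `[0,1]^d` in `ℝ^d`. -/
def cubeIcc (d : ℕ) : Set (Fin d → ℝ) := Set.univ.pi fun _ => Set.Icc (0 : ℝ) 1

/-- The half-open unit cube `[0,1)^d` in `ℝ^d`. -/
def cubeIco (d : ℕ) : Set (Fin d → ℝ) := Set.univ.pi fun _ => Set.Ico (0 : ℝ) 1

/-- `IsGoodBox a b` : the box `∏ᵢ [aᵢ, bᵢ]` satisfies `0 ≤ aᵢ < bᵢ < 1` for all `i`. -/
def IsGoodBox {d : ℕ} (a b : Fin d → ℝ) : Prop := ∀ i, 0 ≤ a i ∧ a i < b i ∧ b i < 1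

/-- The closed box `∏ᵢ [aᵢ, bᵢ]` in `ℝ^d`. -/
def clBox {d : ℕ} (a b : Fin d → ℝ) : Set (Fin d → ℝ) :=
  Set.univ.pi fun i => Set.Icc (a i) (b i)

/-- The extreme norm distance `‖μ − ν‖_E` between two measures on `ℝ^d`:
the supremum over boxes `∏ᵢ [aᵢ, bᵢ]` with `0 ≤ aᵢ < bᵢ < 1` of `|μ(B) − ν(B)|`. -/
def extDist {d : ℕ} (μ ν : Measure (Fin d → ℝ)) : ℝ :=
  ⨆ p : {q : (Fin d → ℝ) × (Fin d → ℝ) // IsGoodBox q.1 q.2},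
    |(μ (clBox p.1.1 p.1.2)).toReal - (ν (clBox p.1.1 p.1.2)).toReal|


set_option maxHeartbeats 1000000

namespace RW

variable {D : ℕ}

instance goodBoxNonempty : Nonempty {q : (Fin D → ℝ) × (Fin D → ℝ) // IsGoodBox q.1 q.2} :=
  ⟨⟨(fun _ => 0, fun _ => 1/2), fun _ => ⟨le_rfl, by norm_num, by norm_num⟩⟩⟩

lemma measurableSet_clBox (a b : Fin D → ℝ) : MeasurableSet (clBox a b) :=
  MeasurableSet.univ_pi fun _ => measurableSet_Icc

lemma toReal_prob_le_one (μ : Measure (Fin D → ℝ)) [IsProbabilityMeasure μ] (s : Set (Fin D → ℝ)) :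
    (μ s).toReal ≤ 1 := by
  have h1 : μ s ≤ 1 := prob_le_one
  calc (μ s).toReal ≤ (1 : ℝ≥0∞).toReal := ENNReal.toReal_mono (by simp) h1
  _ = 1 := by simp

lemma extDist_bddAbove (μ ν : Measure (Fin D → ℝ)) [IsProbabilityMeasure μ]
    [IsProbabilityMeasure ν] :
    BddAbove (Set.range fun p : {q : (Fin D → ℝ) × (Fin D → ℝ) // IsGoodBox q.1 q.2} =>
      |(μ (clBox p.1.1 p.1.2)).toReal - (ν (clBox p.1.1 p.1.2)).toReal|) := by
  refine ⟨1, ?_⟩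
  rintro x ⟨p, rfl⟩
  have h1 := toReal_prob_le_one μ (clBox p.1.1 p.1.2)
  have h2 := toReal_prob_le_one ν (clBox p.1.1 p.1.2)
  have h3 : (0:ℝ) ≤ (μ (clBox p.1.1 p.1.2)).toReal := ENNReal.toReal_nonneg
  have h4 : (0:ℝ) ≤ (ν (clBox p.1.1 p.1.2)).toReal := ENNReal.toReal_nonneg
  rw [abs_sub_le_iff]; constructor <;> linarith

lemma abs_le_extDist (μ ν : Measure (Fin D → ℝ)) [IsProbabilityMeasure μ]
    [IsProbabilityMeasure ν] {a b : Fin D → ℝ} (h : IsGoodBox a b) :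
    |(μ (clBox a b)).toReal - (ν (clBox a b)).toReal| ≤ extDist μ ν :=
  le_ciSup (extDist_bddAbove μ ν) (⟨(a, b), h⟩ :
    {q : (Fin D → ℝ) × (Fin D → ℝ) // IsGoodBox q.1 q.2})

lemma extDist_nonneg (μ ν : Measure (Fin D → ℝ)) : 0 ≤ extDist μ ν :=
  Real.iSup_nonneg fun _ => abs_nonneg _

lemma extDist_le {μ ν : Measure (Fin D → ℝ)} {c : ℝ}
    (h : ∀ a b : Fin D → ℝ, IsGoodBox a b →
      |(μ (clBox a b)).toReal - (ν (clBox a b)).toReal| ≤ c) : extDist μ ν ≤ c :=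
  ciSup_le fun p => h p.1.1 p.1.2 p.2

/-- helper: `a ≤ b + C*δ` for all small positive `δ` implies `a ≤ b`. -/
lemma le_of_forall_small {a b C : ℝ} (hC : 0 ≤ C) (δ₀ : ℝ) (hδ₀ : 0 < δ₀)
    (h : ∀ δ : ℝ, 0 < δ → δ < δ₀ → a ≤ b + C * δ) : a ≤ b := by
  refine le_of_forall_pos_le_add fun ε hε => ?_
  have hd : 0 < min (δ₀ / 2) (ε / (C + 1)) := by positivity
  have hd1 : min (δ₀ / 2) (ε / (C + 1)) < δ₀ :=
    lt_of_le_of_lt (min_le_left _ _) (by linarith)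
  have := h _ hd hd1
  have h2 : C * min (δ₀ / 2) (ε / (C + 1)) ≤ ε := by
    have h3 : min (δ₀ / 2) (ε / (C + 1)) ≤ ε / (C + 1) := min_le_right _ _
    have h4 : C * min (δ₀ / 2) (ε / (C + 1)) ≤ C * (ε / (C + 1)) :=
      mul_le_mul_of_nonneg_left h3 hC
    have h5 : C * (ε / (C + 1)) ≤ ε := by
      rw [mul_div_assoc'] ; rw [div_le_iff₀ (by linarith)]
      nlinarith
    linarith
  linarith

/-- volume bound for a box with all sides `≤ 1` through one small side. -/
lemma meas_box_le {ν : Measure (Fin D → ℝ)} {M : ℝ≥0∞} (hν : ν ≤ M • volume)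
    (c d : Fin D → ℝ) (hcd : ∀ j, d j - c j ≤ 1) (i : Fin D) :
    ν (clBox c d) ≤ M * ENNReal.ofReal (d i - c i) := by
  have h1 : ν (clBox c d) ≤ (M • volume) (clBox c d) := hν _
  have h2 : (M • volume) (clBox c d) = M * volume (clBox c d) := rfl
  have h3 : volume (clBox c d) = ∏ j, ENNReal.ofReal (d j - c j) := by
    rw [clBox, Set.pi_univ_Icc]; exact Real.volume_Icc_pi
  have h4 : (∏ j, ENNReal.ofReal (d j - c j)) ≤ ENNReal.ofReal (d i - c i) := by
    calc (∏ j, ENNReal.ofReal (d j - c j))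
        ≤ ∏ j, (if j = i then ENNReal.ofReal (d i - c i) else 1) := by
          apply Finset.prod_le_prod' ; intro j _
          by_cases hj : j = i
          · subst hj; simp
          · simp only [hj, if_false]
            exact ENNReal.ofReal_le_one.2 (hcd j)
      _ = ENNReal.ofReal (d i - c i) := by
          rw [Finset.prod_ite_eq' Finset.univ i fun _ => ENNReal.ofReal (d i - c i)]
          simp
  calc ν (clBox c d) ≤ M * volume (clBox c d) := by rw [← h2]; exact h1
  _ ≤ M * ENNReal.ofReal (d i - c i) := by rw [h3]; exact mul_le_mul_right h4 _

lemma mem_clBox {a b x : Fin D → ℝ} : x ∈ clBox a b ↔ ∀ i, a i ≤ x i ∧ x i ≤ b i := by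
  unfold clBox
  rw [Set.mem_univ_pi]
  simp only [Set.mem_Icc]

lemma clBox_subset {e f e' f' : Fin D → ℝ} (he : ∀ j, e' j ≤ e j) (hf : ∀ j, f j ≤ f' j) :
    clBox e f ⊆ clBox e' f' := by
  intro x hx
  rw [mem_clBox] at hx ⊢
  exact fun i => ⟨(he i).trans (hx i).1, (hx i).2.trans (hf i)⟩

lemma meas_box_le_real {ν : Measure (Fin D → ℝ)} {M : ℝ≥0∞} (hM : M ≠ ⊤)
    (hν : ν ≤ M • volume) (c d : Fin D → ℝ) (hcd : ∀ j, d j - c j ≤ 1) (i : Fin D)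
    (hi : 0 ≤ d i - c i) : (ν (clBox c d)).toReal ≤ M.toReal * (d i - c i) := by
  have h1 := meas_box_le hν c d hcd i
  have hfin : M * ENNReal.ofReal (d i - c i) ≠ ⊤ := ENNReal.mul_ne_top hM ENNReal.ofReal_ne_top
  have h2 := ENNReal.toReal_mono hfin h1
  rwa [ENNReal.toReal_mul, ENNReal.toReal_ofReal hi] at h2

lemma boxDiff (μ ν : Measure (Fin D → ℝ)) [IsProbabilityMeasure μ] [IsProbabilityMeasure ν]
    {M : ℝ≥0∞} (hM : M ≠ ⊤) (hν : ν ≤ M • volume)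
    {e f : Fin D → ℝ} (he : ∀ i, 0 ≤ e i) (hf : ∀ i, f i < 1) :
    |(μ (clBox e f)).toReal - (ν (clBox e f)).toReal| ≤ extDist μ ν := by
  by_cases hgood : ∀ i, e i < f i
  · exact abs_le_extDist _ _ (fun i => ⟨he i, hgood i, hf i⟩)
  push_neg at hgood
  obtain ⟨i, hi⟩ := hgood
  by_cases hemp : ∃ j, f j < e j
  · obtain ⟨j, hj⟩ := hemp
    have hE : clBox e f = ∅ := by
      rw [Set.eq_empty_iff_forall_notMem]
      intro x hx
      rw [mem_clBox] at hx
      exact absurd ((hx j).1.trans (hx j).2) (not_le.2 hj)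
    simp only [hE, measure_empty, ENNReal.toReal_zero, sub_zero, sub_self, abs_zero]
    exact extDist_nonneg μ ν
  push_neg at hemp
  -- degenerate: ∀ j, e j ≤ f j, and e i = f i
  have hei : e i = f i := le_antisymm (hemp i) hi
  have hside : ∀ j, f j - e j ≤ 1 := fun j => by
    have := he j; have := hf j; linarith
  have hν0 : (ν (clBox e f)).toReal = 0 := by
    have h1 := meas_box_le_real hM hν e f hside i (by rw [hei]; simp)
    have h2 : (0:ℝ) ≤ (ν (clBox e f)).toReal := ENNReal.toReal_nonneg
    rw [hei] at h1; simp at h1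
    linarith
  rw [hν0, sub_zero, abs_of_nonneg ENNReal.toReal_nonneg]
  -- now show μ (clBox e f) ≤ extDist via thin boxes
  have hne : (Finset.univ : Finset (Fin D)).Nonempty := ⟨i, Finset.mem_univ i⟩
  set δ₀ : ℝ := Finset.univ.inf' hne (fun j => 1 - f j) with hδ₀def
  have hδ₀pos : 0 < δ₀ := by
    rw [hδ₀def, Finset.lt_inf'_iff]
    intro j _; have := hf j; linarith
  refine le_of_forall_small (C := M.toReal) ENNReal.toReal_nonneg δ₀ hδ₀pos fun δ hδ hδlt => ?_
  set f' : Fin D → ℝ := fun j => f j + δ with hf'def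
  have hδle : ∀ j, δ < 1 - f j := fun j => lt_of_lt_of_le hδlt (by
    rw [hδ₀def]; exact Finset.inf'_le _ (Finset.mem_univ j))
  have hgood' : IsGoodBox e f' := fun j =>
    ⟨he j, lt_of_le_of_lt (hemp j) (by simp [hf'def]; linarith), by
      have := hδle j; simp only [hf'def]; linarith⟩
  have hsub : clBox e f ⊆ clBox e f' := clBox_subset (fun _ => le_rfl)
    (fun j => by simp [hf'def]; linarith)
  have hmono : (μ (clBox e f)).toReal ≤ (μ (clBox e f')).toReal :=
    ENNReal.toReal_mono (measure_ne_top _ _) (measure_mono hsub)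
  have habs := abs_le_extDist μ ν hgood'
  have hνf' : (ν (clBox e f')).toReal ≤ M.toReal * δ := by
    have h1 : ∀ j, f' j - e j ≤ 1 := fun j => by
      have := hδle j; have := he j; simp only [hf'def]; linarith
    have h2 := meas_box_le_real hM hν e f' h1 i (by simp only [hf'def]; rw [← hei]; linarith)
    have h3 : f' i - e i = δ := by simp only [hf'def]; rw [← hei]; ring
    rw [h3] at h2
    exact h2
  have h3 : (μ (clBox e f')).toReal - (ν (clBox e f')).toReal ≤ extDist μ ν :=
    (abs_le.1 habs).2
  have hνnn : (0:ℝ) ≤ (ν (clBox e f')).toReal := ENNReal.toReal_nonneg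
  calc (μ (clBox e f)).toReal ≤ (μ (clBox e f')).toReal := hmono
  _ ≤ extDist μ ν + (ν (clBox e f')).toReal := by linarith
  _ ≤ extDist μ ν + M.toReal * δ := by linarith
lemma toReal_le_add_of_le {μ : Measure (Fin D → ℝ)} [IsFiniteMeasure μ]
    {A B C : Set (Fin D → ℝ)} (h : A ⊆ B ∪ C) :
    (μ A).toReal ≤ (μ B).toReal + (μ C).toReal := by
  have h1 : μ A ≤ μ B + μ C := (measure_mono h).trans (measure_union_le _ _)
  have h2 := ENNReal.toReal_mono (by finiteness) h1
  rwa [ENNReal.toReal_add (measure_ne_top _ _) (measure_ne_top _ _)] at h2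

/-- the shell `clBox e f \ clBox e (f - δ)` has small `ν`-measure. -/
lemma shell_bound {ν : Measure (Fin D → ℝ)} [IsFiniteMeasure ν] {M : ℝ≥0∞} (hM : M ≠ ⊤)
    (hν : ν ≤ M • volume) {e f : Fin D → ℝ} (hfe : ∀ i, f i - e i ≤ 1)
    {δ : ℝ} (hδ : 0 < δ) (hδ1 : δ ≤ 1) :
    (ν (clBox e f \ clBox e (fun j => f j - δ))).toReal ≤ D * (M.toReal * δ) := by
  have hsub : clBox e f \ clBox e (fun j => f j - δ) ⊆
      ⋃ i, clBox (Function.update e i (f i - δ)) f := by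
    rintro x ⟨hx1, hx2⟩
    rw [mem_clBox] at hx1
    rw [mem_clBox] at hx2
    push_neg at hx2
    obtain ⟨i, hi⟩ := hx2
    have hxi : f i - δ < x i := hi (hx1 i).1
    refine Set.mem_iUnion.2 ⟨i, ?_⟩
    rw [mem_clBox]
    intro j
    by_cases hj : j = i
    · subst hj; rw [Function.update_self]; exact ⟨hxi.le, (hx1 j).2⟩
    · rw [Function.update_of_ne hj]; exact hx1 j
  have hslab : ∀ i : Fin D, ν (clBox (Function.update e i (f i - δ)) f) ≤ M * ENNReal.ofReal δ := by
    intro i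
    have hside : ∀ j, f j - Function.update e i (f i - δ) j ≤ 1 := by
      intro j
      by_cases hj : j = i
      · subst hj; rw [Function.update_self]; linarith
      · rw [Function.update_of_ne hj]; have := hfe j; linarith
    have := meas_box_le hν (Function.update e i (f i - δ)) f hside i
    rwa [Function.update_self, sub_sub_cancel] at this
  have h1 : ν (clBox e f \ clBox e (fun j => f j - δ)) ≤ (D : ℝ≥0∞) * (M * ENNReal.ofReal δ) := by
    calc ν (clBox e f \ clBox e (fun j => f j - δ))
        ≤ ν (⋃ i, clBox (Function.update e i (f i - δ)) f) := measure_mono hsub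
      _ ≤ ∑ i : Fin D, ν (clBox (Function.update e i (f i - δ)) f) :=
          (measure_iUnion_le _).trans (by rw [tsum_fintype])
      _ ≤ ∑ _i : Fin D, M * ENNReal.ofReal δ := Finset.sum_le_sum fun i _ => hslab i
      _ = (D : ℝ≥0∞) * (M * ENNReal.ofReal δ) := by
          rw [Finset.sum_const, Finset.card_univ, Fintype.card_fin, nsmul_eq_mul]
  have hfin : (D : ℝ≥0∞) * (M * ENNReal.ofReal δ) ≠ ⊤ := by
    exact ENNReal.mul_ne_top (by simp) (ENNReal.mul_ne_top hM ENNReal.ofReal_ne_top)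
  have h2 := ENNReal.toReal_mono hfin h1
  rwa [ENNReal.toReal_mul, ENNReal.toReal_mul, ENNReal.toReal_ofReal hδ.le,
    ENNReal.toReal_natCast] at h2

lemma setDiff (μ ν : Measure (Fin D → ℝ)) [IsProbabilityMeasure μ] [IsProbabilityMeasure ν]
    {M : ℝ≥0∞} (hM : M ≠ ⊤) (hν : ν ≤ M • volume)
    {e f : Fin D → ℝ} (he : ∀ i, 0 ≤ e i) (hf : ∀ i, f i < 1)
    {S : Set (Fin D → ℝ)}
    (hsub : S ⊆ clBox e f) (hsup : ∀ δ : ℝ, 0 < δ → clBox e (fun j => f j - δ) ⊆ S) :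
    |(μ S).toReal - (ν S).toReal| ≤ extDist μ ν := by
  have hC : (0:ℝ) ≤ (D : ℝ) * M.toReal := by positivity
  rw [abs_sub_le_iff]
  constructor
  · -- μ S - ν S ≤ E
    refine le_of_forall_small (C := (D : ℝ) * M.toReal) hC 1 one_pos fun δ hδ hδ1 => ?_
    have h1 : (μ S).toReal ≤ (μ (clBox e f)).toReal :=
      ENNReal.toReal_mono (measure_ne_top _ _) (measure_mono hsub)
    have h2 : (μ (clBox e f)).toReal - (ν (clBox e f)).toReal ≤ extDist μ ν :=
      (abs_le.1 (boxDiff μ ν hM hν he hf)).2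
    have h3 : (ν (clBox e f)).toReal ≤ (ν S).toReal +
        (ν (clBox e f \ clBox e (fun j => f j - δ))).toReal := by
      refine toReal_le_add_of_le ?_
      intro x hx
      by_cases hxS : x ∈ S
      · exact Or.inl hxS
      · exact Or.inr ⟨hx, fun hmem => hxS (hsup δ hδ hmem)⟩
    have h4 := shell_bound hM hν (fun j => by have := he j; have := hf j; linarith : ∀ i, f i - e i ≤ 1) hδ hδ1.le
    have : (D : ℝ) * M.toReal * δ = (D : ℝ) * (M.toReal * δ) := by ring
    rw [this]
    linarith
  · -- ν S - μ S ≤ E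
    refine le_of_forall_small (C := (D : ℝ) * M.toReal) hC 1 one_pos fun δ hδ hδ1 => ?_
    have hf' : ∀ i, (fun j => f j - δ) i < 1 := fun i => by have := hf i; simp; linarith
    have h1 : (μ (clBox e (fun j => f j - δ))).toReal ≤ (μ S).toReal :=
      ENNReal.toReal_mono (measure_ne_top _ _) (measure_mono (hsup δ hδ))
    have h2 : (ν (clBox e (fun j => f j - δ))).toReal -
        (μ (clBox e (fun j => f j - δ))).toReal ≤ extDist μ ν := by
      have := boxDiff μ ν hM hν he hf' ; rw [abs_sub_le_iff] at this; exact this.2.trans le_rfl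
    have h3 : (ν S).toReal ≤ (ν (clBox e (fun j => f j - δ))).toReal +
        (ν (clBox e f \ clBox e (fun j => f j - δ))).toReal := by
      refine toReal_le_add_of_le ?_
      intro x hx
      by_cases hmem : x ∈ clBox e (fun j => f j - δ)
      · exact Or.inl hmem
      · exact Or.inr ⟨hsub hx, hmem⟩
    have h4 := shell_bound hM hν (fun j => by have := he j; have := hf j; linarith : ∀ i, f i - e i ≤ 1) hδ hδ1.le
    have : (D : ℝ) * M.toReal * δ = (D : ℝ) * (M.toReal * δ) := by ring
    rw [this]
    linarith
def cell (n : ℕ) (k : Fin D → Fin n) : Set (Fin D → ℝ) :=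
  Set.univ.pi fun i => Set.Ico ((k i : ℝ) / n) (((k i : ℝ) + 1) / n)

lemma mem_cell {n : ℕ} {k : Fin D → Fin n} {x : Fin D → ℝ} :
    x ∈ cell n k ↔ ∀ i, (k i : ℝ) / n ≤ x i ∧ x i < ((k i : ℝ) + 1) / n := by
  unfold cell; rw [Set.mem_univ_pi]; simp only [Set.mem_Ico]

lemma measurableSet_cell (n : ℕ) (k : Fin D → Fin n) : MeasurableSet (cell n k) :=
  MeasurableSet.univ_pi fun _ => measurableSet_Ico

lemma cell_disjoint {n : ℕ} (hn : 0 < n) : Pairwise (Function.onFun Disjoint (cell (D := D) n)) := by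
  intro k k' hkk'
  have hex : ∃ i, k i ≠ k' i := by
    by_contra h; push_neg at h; exact hkk' (funext h)
  obtain ⟨i, hi⟩ := hex
  rw [Function.onFun, Set.disjoint_left]
  intro x hx hx'
  rw [mem_cell] at hx hx'
  have h1 := hx i
  have h2 := hx' i
  have hnpos : (0:ℝ) < n := Nat.cast_pos.2 hn
  have key : ∀ m m' : Fin n, (m : ℕ) < (m' : ℕ) →
      ((m : ℝ) + 1) / n ≤ (m' : ℝ) / n := by
    intro m m' h
    apply (div_le_div_iff_of_pos_right hnpos).2
    exact_mod_cast Nat.succ_le_of_lt h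
  rcases lt_or_gt_of_ne (fun h => hi (Fin.ext h) : (k i : ℕ) ≠ (k' i : ℕ)) with h | h
  · exact absurd (h2.1.trans_lt h1.2) (not_lt.2 (key _ _ h))
  · exact absurd (h1.1.trans_lt h2.2) (not_lt.2 (key _ _ h))

lemma exists_cell_mem {n : ℕ} (hn : 0 < n) {x : Fin D → ℝ}
    (hx : ∀ i, 0 ≤ x i ∧ x i < 1) : ∃ k : Fin D → Fin n, x ∈ cell n k := by
  have hnpos : (0:ℝ) < n := Nat.cast_pos.2 hn
  have hlt : ∀ i, ⌊x i * n⌋₊ < n := by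
    intro i
    rw [Nat.floor_lt (mul_nonneg (hx i).1 hnpos.le)]
    calc x i * n < 1 * n := by
          apply mul_lt_mul_of_pos_right (hx i).2 hnpos
    _ = n := one_mul _
  refine ⟨fun i => ⟨⌊x i * n⌋₊, hlt i⟩, ?_⟩
  rw [mem_cell]
  intro i
  constructor
  · rw [div_le_iff₀ hnpos]
    exact Nat.floor_le (mul_nonneg (hx i).1 hnpos.le)
  · rw [lt_div_iff₀ hnpos]
    exact Nat.lt_floor_add_one (x i * n)

lemma integrable_of_bounded (μ : Measure (Fin D → ℝ)) [IsFiniteMeasure μ]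
    {g : (Fin D → ℝ) → ℝ} (hg : Continuous g) {b0 : ℝ} (hb : ∀ x, |g x| ≤ b0) :
    Integrable g μ :=
  (integrable_const b0).mono' hg.aestronglyMeasurable
    (ae_of_all _ fun x => by simpa [Real.norm_eq_abs] using hb x)

/-- Per-box uniform integral comparison. -/
lemma box_integral_diff (μ ν : Measure (Fin D → ℝ)) [IsProbabilityMeasure μ]
    [IsProbabilityMeasure ν] {M : ℝ≥0∞} (hM : M ≠ ⊤) (hν : ν ≤ M • volume)
    {g : (Fin D → ℝ) → ℝ} (hg : Continuous g) {b0 : ℝ} (hb : ∀ x, |g x| ≤ b0)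
    {n : ℕ} (hn : 0 < n) {ε₁ : ℝ}
    (hgu : ∀ x y : Fin D → ℝ, x ∈ cubeIcc D → y ∈ cubeIcc D →
      (∀ i, |x i - y i| ≤ 1 / n) → |g x - g y| ≤ ε₁)
    {a c : Fin D → ℝ} (hac : IsGoodBox a c) :
    |∫ x in clBox a c, g x ∂μ - ∫ x in clBox a c, g x ∂ν| ≤
      ε₁ * ((μ (clBox a c)).toReal + (ν (clBox a c)).toReal) +
        (n ^ D : ℝ) * (b0 * extDist μ ν) := by
  have hnpos : (0:ℝ) < n := Nat.cast_pos.2 hn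
  have hb0 : 0 ≤ b0 := le_trans (abs_nonneg _) (hb 0)
  set B := clBox a c with hBdef
  set S : (Fin D → Fin n) → Set (Fin D → ℝ) := fun k => B ∩ cell n k with hSdef
  have hSm : ∀ k, MeasurableSet (S k) := fun k =>
    (measurableSet_clBox a c).inter (measurableSet_cell n k)
  have hSdisj : Pairwise (Function.onFun Disjoint S) := fun k k' h =>
    ((cell_disjoint hn h).mono inter_subset_right inter_subset_right)
  have hBunion : B = ⋃ k, S k := by
    ext x
    constructor
    · intro hxB
      have hx : ∀ i, 0 ≤ x i ∧ x i < 1 := by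
        intro i
        have h1 := (mem_clBox.1 hxB) i
        exact ⟨(hac i).1.trans h1.1, h1.2.trans_lt (hac i).2.2⟩
      obtain ⟨k, hk⟩ := exists_cell_mem hn hx
      exact Set.mem_iUnion.2 ⟨k, hxB, hk⟩
    · rintro hx
      obtain ⟨k, hk1, -⟩ := Set.mem_iUnion.1 hx
      exact hk1
  have hgint : ∀ (ρ' : Measure (Fin D → ℝ)) [IsProbabilityMeasure ρ'], Integrable g ρ' :=
    fun ρ' _ => integrable_of_bounded ρ' hg hb
  have hμsum : ∫ x in B, g x ∂μ = ∑ k, ∫ x in S k, g x ∂μ := by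
    rw [hBunion]
    exact integral_iUnion_fintype hSm hSdisj fun k => (hgint μ).integrableOn
  have hνsum : ∫ x in B, g x ∂ν = ∑ k, ∫ x in S k, g x ∂ν := by
    rw [hBunion]
    exact integral_iUnion_fintype hSm hSdisj fun k => (hgint ν).integrableOn
  have hμmsum : (μ B).toReal = ∑ k, (μ (S k)).toReal := by
    rw [hBunion, measure_iUnion hSdisj hSm, tsum_fintype,
      ENNReal.toReal_sum (fun k _ => measure_ne_top _ _)]
  have hνmsum : (ν B).toReal = ∑ k, (ν (S k)).toReal := by
    rw [hBunion, measure_iUnion hSdisj hSm, tsum_fintype,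
      ENNReal.toReal_sum (fun k _ => measure_ne_top _ _)]
  -- per cell estimate
  have hcell : ∀ k : Fin D → Fin n,
      |∫ x in S k, g x ∂μ - ∫ x in S k, g x ∂ν| ≤
        ε₁ * ((μ (S k)).toReal + (ν (S k)).toReal) + b0 * extDist μ ν := by
    intro k
    set e : Fin D → ℝ := fun i => max (a i) ((k i : ℝ) / n) with hedef
    set f : Fin D → ℝ := fun i => min (c i) (((k i : ℝ) + 1) / n) with hfdef
    have he : ∀ i, 0 ≤ e i := fun i => le_max_of_le_left (hac i).1
    have hf : ∀ i, f i < 1 := fun i => lt_of_le_of_lt (min_le_left _ _) (hac i).2.2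
    have hsub : S k ⊆ clBox e f := by
      rintro x ⟨hx1, hx2⟩
      rw [mem_clBox] at hx1 ⊢
      rw [mem_cell] at hx2
      intro i
      exact ⟨max_le (hx1 i).1 (hx2 i).1, le_min (hx1 i).2 (hx2 i).2.le⟩
    have hsup : ∀ δ : ℝ, 0 < δ → clBox e (fun j => f j - δ) ⊆ S k := by
      intro δ hδ x hx
      rw [mem_clBox] at hx
      constructor
      · rw [mem_clBox]
        intro i
        have h1 := (hx i).1
        have h2 := (hx i).2
        have h3 : e i ≥ a i := le_max_left _ _
        have h4 : f i - δ ≤ c i := by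
          have := min_le_left (c i) (((k i : ℝ) + 1) / n); simp only [hfdef]; linarith
        exact ⟨h3.trans h1, h2.trans h4⟩
      · rw [mem_cell]
        intro i
        have h1 := (hx i).1
        have h2 := (hx i).2
        have h3 : (k i : ℝ) / n ≤ e i := le_max_right _ _
        have h4 : f i - δ < ((k i : ℝ) + 1) / n := by
          have := min_le_right (c i) (((k i : ℝ) + 1) / n); simp only [hfdef]; linarith
        exact ⟨h3.trans h1, lt_of_le_of_lt h2 h4⟩
    have hmd : |(μ (S k)).toReal - (ν (S k)).toReal| ≤ extDist μ ν :=
      setDiff μ ν hM hν he hf hsub hsup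
    -- the reference point
    set p : Fin D → ℝ := fun i => (k i : ℝ) / n with hpdef
    have hpcube : p ∈ cubeIcc D := by
      rw [cubeIcc, Set.mem_univ_pi]
      intro i
      rw [Set.mem_Icc]
      constructor
      · positivity
      · rw [div_le_one hnpos]
        exact_mod_cast (k i).2.le
    have hgx : ∀ x ∈ S k, |g x - g p| ≤ ε₁ := by
      rintro x ⟨hx1, hx2⟩
      rw [mem_clBox] at hx1
      rw [mem_cell] at hx2
      have hxcube : x ∈ cubeIcc D := by
        rw [cubeIcc, Set.mem_univ_pi]
        intro i
        rw [Set.mem_Icc]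
        exact ⟨(hac i).1.trans (hx1 i).1, (hx1 i).2.trans (hac i).2.2.le⟩
      refine hgu x p hxcube hpcube fun i => ?_
      have h1 := (hx2 i).1
      have h2 := (hx2 i).2
      have h3 : ((k i : ℝ) + 1) / n = (k i : ℝ) / n + 1 / n := by ring
      have h0 : (0:ℝ) < 1 / n := by positivity
      rw [h3] at h2
      have hpi : p i = (k i : ℝ) / n := rfl
      rw [abs_le, hpi]
      constructor <;> linarith
    have hμconst : |∫ x in S k, g x ∂μ - g p * (μ (S k)).toReal| ≤ ε₁ * (μ (S k)).toReal := by
      have heq : ∫ x in S k, g x ∂μ - g p * (μ (S k)).toReal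
          = ∫ x in S k, (g x - g p) ∂μ := by
        rw [integral_sub (hgint μ).integrableOn (integrableOn_const (measure_ne_top _ _))]
        rw [setIntegral_const]
        simp [smul_eq_mul, mul_comm, Measure.real]
      rw [heq]
      have hbound : ∀ x ∈ S k, ‖g x - g p‖ ≤ ε₁ := fun x hx => by
        rw [Real.norm_eq_abs]; exact hgx x hx
      have key := norm_setIntegral_le_of_norm_le_const (μ := μ) (s := S k)
        (f := fun x => g x - g p) (measure_lt_top μ (S k)) hbound
      rw [Real.norm_eq_abs] at key
      exact key
    have hνconst : |∫ x in S k, g x ∂ν - g p * (ν (S k)).toReal| ≤ ε₁ * (ν (S k)).toReal := by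
      have heq : ∫ x in S k, g x ∂ν - g p * (ν (S k)).toReal
          = ∫ x in S k, (g x - g p) ∂ν := by
        rw [integral_sub (hgint ν).integrableOn (integrableOn_const (measure_ne_top _ _))]
        rw [setIntegral_const]
        simp [smul_eq_mul, mul_comm, Measure.real]
      rw [heq]
      have hbound : ∀ x ∈ S k, ‖g x - g p‖ ≤ ε₁ := fun x hx => by
        rw [Real.norm_eq_abs]; exact hgx x hx
      have key := norm_setIntegral_le_of_norm_le_const (μ := ν) (s := S k)
        (f := fun x => g x - g p) (measure_lt_top ν (S k)) hbound
      rw [Real.norm_eq_abs] at key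
      exact key
    have hgp : |g p| ≤ b0 := hb p
    have hmid : |g p * (μ (S k)).toReal - g p * (ν (S k)).toReal| ≤ b0 * extDist μ ν := by
      rw [← mul_sub, abs_mul]
      exact mul_le_mul hgp hmd (abs_nonneg _) hb0
    have t1 := abs_sub_le (∫ x in S k, g x ∂μ) (g p * (μ (S k)).toReal) (∫ x in S k, g x ∂ν)
    have t2 := abs_sub_le (g p * (μ (S k)).toReal) (g p * (ν (S k)).toReal) (∫ x in S k, g x ∂ν)
    have h5 : |g p * (ν (S k)).toReal - ∫ x in S k, g x ∂ν| =
        |∫ x in S k, g x ∂ν - g p * (ν (S k)).toReal| := abs_sub_comm _ _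
    linarith [t1, t2, hμconst, hνconst, hmid, h5]
  -- sum up
  have hcard : (Fintype.card (Fin D → Fin n) : ℝ) = (n ^ D : ℝ) := by
    rw [Fintype.card_fun]
    simp
  calc |∫ x in B, g x ∂μ - ∫ x in B, g x ∂ν|
      = |∑ k, (∫ x in S k, g x ∂μ - ∫ x in S k, g x ∂ν)| := by
        rw [hμsum, hνsum, Finset.sum_sub_distrib]
    _ ≤ ∑ k, |∫ x in S k, g x ∂μ - ∫ x in S k, g x ∂ν| := Finset.abs_sum_le_sum_abs _ _
    _ ≤ ∑ k, (ε₁ * ((μ (S k)).toReal + (ν (S k)).toReal) + b0 * extDist μ ν) :=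
        Finset.sum_le_sum fun k _ => hcell k
    _ = ε₁ * ((μ B).toReal + (ν B).toReal) + (n ^ D : ℝ) * (b0 * extDist μ ν) := by
        rw [Finset.sum_add_distrib, Finset.sum_const, ← Finset.mul_sum, Finset.sum_add_distrib,
          hμmsum, hνmsum, Finset.card_univ, nsmul_eq_mul, hcard]
lemma cubeIcc_eq_clBox : cubeIcc D = clBox (fun _ => (0:ℝ)) (fun _ => (1:ℝ)) := rfl

lemma measurableSet_cubeIcc : MeasurableSet (cubeIcc D) :=
  MeasurableSet.univ_pi fun _ => measurableSet_Icc

lemma compl_cube_null (μ : Measure (Fin D → ℝ)) [IsProbabilityMeasure μ]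
    (hμc : μ (cubeIcc D) = 1) : μ (cubeIcc D)ᶜ = 0 := by
  rw [measure_compl measurableSet_cubeIcc (measure_ne_top _ _), hμc, measure_univ]
  simp

lemma restrict_cube (μ : Measure (Fin D → ℝ)) [IsProbabilityMeasure μ]
    (hμc : μ (cubeIcc D) = 1) {g : (Fin D → ℝ) → ℝ} :
    ∫ x, g x ∂μ = ∫ x in cubeIcc D, g x ∂μ := by
  rw [Measure.restrict_eq_self_of_ae_mem]
  have h0 := compl_cube_null μ hμc
  rw [ae_iff]
  exact h0

/-- full-space uniform integral comparison. -/
lemma total_integral_diff (μ ν : Measure (Fin D → ℝ)) [IsProbabilityMeasure μ]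
    [IsProbabilityMeasure ν] {M : ℝ≥0∞} (hM : M ≠ ⊤) (hν : ν ≤ M • volume)
    (hμc : μ (cubeIcc D) = 1) (hνc : ν (cubeIcc D) = 1)
    {g : (Fin D → ℝ) → ℝ} (hg : Continuous g) {b0 : ℝ} (hb : ∀ x, |g x| ≤ b0)
    {n : ℕ} (hn : 0 < n) {ε₁ : ℝ}
    (hgu : ∀ x y : Fin D → ℝ, x ∈ cubeIcc D → y ∈ cubeIcc D →
      (∀ i, |x i - y i| ≤ 1 / n) → |g x - g y| ≤ ε₁)
    {γ : ℝ} (hγ0 : 0 < γ) (hγ1 : γ < 1) :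
    |∫ x, g x ∂μ - ∫ x, g x ∂ν| ≤
      2 * ε₁ + (n ^ D : ℝ) * (b0 * extDist μ ν) +
        b0 * ((D : ℝ) * M.toReal * γ + extDist μ ν) + b0 * ((D : ℝ) * M.toReal * γ) := by
  have hb0 : 0 ≤ b0 := le_trans (abs_nonneg _) (hb 0)
  have hε₁ : 0 ≤ ε₁ := by
    have h0 : (fun _ : Fin D => (0:ℝ)) ∈ cubeIcc D := by
      rw [cubeIcc, Set.mem_univ_pi]; intro i; rw [Set.mem_Icc]; norm_num
    have := hgu _ _ h0 h0 (fun i => by simpa using (by positivity : (0:ℝ) ≤ 1/(n:ℝ)))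
    simpa using this
  set bigB : Set (Fin D → ℝ) := clBox (fun _ => (0:ℝ)) (fun _ => 1 - γ) with hbigBdef
  have hgood : IsGoodBox (fun _ : Fin D => (0:ℝ)) (fun _ => 1 - γ) := fun i =>
    ⟨le_refl 0, by show (0:ℝ) < 1 - γ; linarith, by show (1:ℝ) - γ < 1; linarith⟩
  have hsubB : bigB ⊆ cubeIcc D := by
    rw [cubeIcc_eq_clBox]
    intro x hx
    rw [mem_clBox] at hx ⊢
    intro i
    exact ⟨(hx i).1, (hx i).2.trans (by linarith)⟩
  -- tail measure bounds
  have hνtail : (ν (cubeIcc D \ bigB)).toReal ≤ (D : ℝ) * (M.toReal * γ) := by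
    have := shell_bound (ν := ν) hM hν
      (e := fun _ => (0:ℝ)) (f := fun _ => (1:ℝ)) (fun i => by norm_num) hγ0 hγ1.le
    have heq : clBox (fun _ => (0:ℝ)) (fun _ => (1:ℝ)) \
        clBox (fun _ => (0:ℝ)) (fun j => (1:ℝ) - γ) = cubeIcc D \ bigB := by
      rw [cubeIcc_eq_clBox, hbigBdef]
    rwa [heq] at this
  have hμmeas : (μ (cubeIcc D \ bigB)).toReal = 1 - (μ bigB).toReal := by
    have h1 : μ (cubeIcc D \ bigB) = μ (cubeIcc D) - μ bigB :=
      measure_diff hsubB (measurableSet_clBox _ _).nullMeasurableSet (measure_ne_top _ _)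
    rw [h1, hμc, ENNReal.toReal_sub_of_le (hμc ▸ measure_mono hsubB) (by simp)]
    simp
  have hνmeas : (ν (cubeIcc D \ bigB)).toReal = 1 - (ν bigB).toReal := by
    have h1 : ν (cubeIcc D \ bigB) = ν (cubeIcc D) - ν bigB :=
      measure_diff hsubB (measurableSet_clBox _ _).nullMeasurableSet (measure_ne_top _ _)
    rw [h1, hνc, ENNReal.toReal_sub_of_le (hνc ▸ measure_mono hsubB) (by simp)]
    simp
  have hbigdiff : |(μ bigB).toReal - (ν bigB).toReal| ≤ extDist μ ν :=
    abs_le_extDist μ ν hgood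
  have hμtail : (μ (cubeIcc D \ bigB)).toReal ≤ (D : ℝ) * (M.toReal * γ) + extDist μ ν := by
    rw [hμmeas]
    have h2 := (abs_le.1 hbigdiff).1
    rw [hνmeas] at hνtail
    linarith
  -- integral decomposition
  have hμint : Integrable g μ := integrable_of_bounded μ hg hb
  have hνint : Integrable g ν := integrable_of_bounded ν hg hb
  have hμsplit : ∫ x, g x ∂μ = ∫ x in bigB, g x ∂μ + ∫ x in cubeIcc D \ bigB, g x ∂μ := by
    rw [restrict_cube μ hμc]
    rw [← integral_inter_add_diff (measurableSet_clBox (fun _ => (0:ℝ)) (fun _ => 1 - γ))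
      hμint.integrableOn]
    rw [Set.inter_eq_self_of_subset_right hsubB]
  have hνsplit : ∫ x, g x ∂ν = ∫ x in bigB, g x ∂ν + ∫ x in cubeIcc D \ bigB, g x ∂ν := by
    rw [restrict_cube ν hνc]
    rw [← integral_inter_add_diff (measurableSet_clBox (fun _ => (0:ℝ)) (fun _ => 1 - γ))
      hνint.integrableOn]
    rw [Set.inter_eq_self_of_subset_right hsubB]
  -- tail integrals
  have htailμ : |∫ x in cubeIcc D \ bigB, g x ∂μ| ≤ b0 * (μ (cubeIcc D \ bigB)).toReal := by
    have := norm_setIntegral_le_of_norm_le_const (f := g) (C := b0) (s := cubeIcc D \ bigB) (measure_lt_top μ _)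
      (fun x _ => by simpa [Real.norm_eq_abs] using hb x)
    rwa [Real.norm_eq_abs] at this
  have htailν : |∫ x in cubeIcc D \ bigB, g x ∂ν| ≤ b0 * (ν (cubeIcc D \ bigB)).toReal := by
    have := norm_setIntegral_le_of_norm_le_const (f := g) (C := b0) (s := cubeIcc D \ bigB) (measure_lt_top ν _)
      (fun x _ => by simpa [Real.norm_eq_abs] using hb x)
    rwa [Real.norm_eq_abs] at this
  -- big box integral diff
  have hbig := box_integral_diff μ ν hM hν hg hb hn hgu hgood
  have hbig2 : |∫ x in bigB, g x ∂μ - ∫ x in bigB, g x ∂ν| ≤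
      2 * ε₁ + (n ^ D : ℝ) * (b0 * extDist μ ν) := by
    have h1 := toReal_prob_le_one μ bigB
    have h2 := toReal_prob_le_one ν bigB
    have h3 : ε₁ * ((μ bigB).toReal + (ν bigB).toReal) ≤ 2 * ε₁ := by nlinarith
    calc |∫ x in bigB, g x ∂μ - ∫ x in bigB, g x ∂ν| ≤
        ε₁ * ((μ bigB).toReal + (ν bigB).toReal) + (n ^ D : ℝ) * (b0 * extDist μ ν) := hbig
      _ ≤ 2 * ε₁ + (n ^ D : ℝ) * (b0 * extDist μ ν) := by linarith
  -- combine
  have hμtb : |∫ x in cubeIcc D \ bigB, g x ∂μ| ≤ b0 * ((D : ℝ) * M.toReal * γ + extDist μ ν) := by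
    refine htailμ.trans ?_
    have : (D : ℝ) * (M.toReal * γ) + extDist μ ν = (D : ℝ) * M.toReal * γ + extDist μ ν := by ring
    rw [← this]
    exact mul_le_mul_of_nonneg_left hμtail hb0
  have hνtb : |∫ x in cubeIcc D \ bigB, g x ∂ν| ≤ b0 * ((D : ℝ) * M.toReal * γ) := by
    refine htailν.trans ?_
    have : (D : ℝ) * (M.toReal * γ) = (D : ℝ) * M.toReal * γ := by ring
    rw [← this]
    exact mul_le_mul_of_nonneg_left hνtail hb0
  rw [hμsplit, hνsplit]
  have hA := abs_le.1 hbig2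
  have hB := abs_le.1 hμtb
  have hC := abs_le.1 hνtb
  rw [abs_le]
  constructor <;> [skip; skip] <;> nlinarith [hA.1, hA.2, hB.1, hB.2, hC.1, hC.2]

end RW

open RW

/-- the change-of-measure step in the proof of Proposition 1:
if `ρ^N → ρ` in extreme norm, `ρ` has a bounded density, and `G ≥ 0` is continuous and
bounded with `ρ(G) > 0`, then eventually `ρ^N(G) > 0` and the self-normalized reweighted
measures `ν^N(dx) = G(x) ρ^N(dx)/ρ^N(G)` converge in extreme norm to
`ν(dx) = G(x) ρ(dx)/ρ(G)`. -/
theorem reweighted_extreme_consistency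
    {D : ℕ} (hD : 1 ≤ D)
    (ρseq : ℕ → Measure (Fin D → ℝ)) (ρ : Measure (Fin D → ℝ))
    [∀ N, IsProbabilityMeasure (ρseq N)] [IsProbabilityMeasure ρ]
    (hseqc : ∀ N, ρseq N (cubeIcc D) = 1) (hρc : ρ (cubeIcc D) = 1)
    (hconv : Tendsto (fun N => extDist (ρseq N) ρ) atTop (nhds 0))
    (hdens : ∃ M : ℝ≥0∞, M ≠ ⊤ ∧ ρ ≤ M • volume)
    (G : (Fin D → ℝ) → ℝ)
    (hGcont : ContinuousOn G (cubeIcc D))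
    (hGbd : ∃ b : ℝ, ∀ x ∈ cubeIcc D, |G x| ≤ b)
    (hGnn : ∀ x ∈ cubeIcc D, 0 ≤ G x)
    (hGpos : 0 < ∫ x, G x ∂ρ) :
    (∀ᶠ N in atTop, 0 < ∫ x, G x ∂(ρseq N)) ∧
    Tendsto (fun N =>
        extDist
          ((ENNReal.ofReal (∫ x, G x ∂(ρseq N)))⁻¹ •
            (ρseq N).withDensity fun x => ENNReal.ofReal (G x))
          ((ENNReal.ofReal (∫ x, G x ∂ρ))⁻¹ •
            ρ.withDensity fun x => ENNReal.ofReal (G x)))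
      atTop (nhds 0) := by
  obtain ⟨M, hM, hρle⟩ := hdens
  obtain ⟨b, hGb⟩ := hGbd
  -- the clamping projection onto the cube
  set proj : (Fin D → ℝ) → (Fin D → ℝ) := fun x i => max 0 (min 1 (x i)) with hprojdef
  have hprojmem : ∀ x, proj x ∈ cubeIcc D := by
    intro x
    rw [cubeIcc, Set.mem_univ_pi]
    intro i
    rw [Set.mem_Icc]
    constructor
    · exact le_max_left _ _
    · exact max_le (by norm_num) (min_le_left _ _)
  have hprojid : ∀ x ∈ cubeIcc D, proj x = x := by
    intro x hx
    rw [cubeIcc, Set.mem_univ_pi] at hx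
    funext i
    have h := hx i
    rw [Set.mem_Icc] at h
    show max 0 (min 1 (x i)) = x i
    rw [min_eq_right h.2, max_eq_right h.1]
  have hprojcont : Continuous proj :=
    continuous_pi fun i => continuous_const.max (continuous_const.min (continuous_apply i))
  -- the extended function g
  set g : (Fin D → ℝ) → ℝ := fun x => G (proj x) with hgdef
  have hgcont : Continuous g := hGcont.comp_continuous hprojcont hprojmem
  have hgb : ∀ x, |g x| ≤ b := fun x => hGb (proj x) (hprojmem x)
  have hgnn : ∀ x, 0 ≤ g x := fun x => hGnn (proj x) (hprojmem x)
  have hb0 : 0 ≤ b := le_trans (abs_nonneg _) (hgb 0)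
  have hgG : ∀ x ∈ cubeIcc D, G x = g x := fun x hx => by
    show G x = G (proj x); rw [hprojid x hx]
  -- a.e. equality with G
  have hae : ∀ (μ' : Measure (Fin D → ℝ)) [IsProbabilityMeasure μ'],
      μ' (cubeIcc D) = 1 → G =ᵐ[μ'] g := by
    intro μ' _ hc
    have : {x | ¬ G x = g x} ⊆ (cubeIcc D)ᶜ := by
      intro x hx
      intro hmem
      exact hx (hgG x hmem)
    exact measure_mono_null this (compl_cube_null μ' hc)
  have hwd : ∀ (μ' : Measure (Fin D → ℝ)) [IsProbabilityMeasure μ'],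
      μ' (cubeIcc D) = 1 →
      μ'.withDensity (fun x => ENNReal.ofReal (G x)) =
        μ'.withDensity (fun x => ENNReal.ofReal (g x)) := by
    intro μ' _ hc
    exact withDensity_congr_ae ((hae μ' hc).mono fun x hx => by dsimp only; rw [hx])
  have hIμ : ∀ N, ∫ x, G x ∂(ρseq N) = ∫ x, g x ∂(ρseq N) := fun N =>
    integral_congr_ae (hae (ρseq N) (hseqc N))
  have hIρ : ∫ x, G x ∂ρ = ∫ x, g x ∂ρ := integral_congr_ae (hae ρ hρc)
  set I : ℝ := ∫ x, g x ∂ρ with hIdef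
  have hIpos : 0 < I := hIρ ▸ hGpos
  set IN : ℕ → ℝ := fun N => ∫ x, g x ∂(ρseq N) with hINdef
  -- uniform continuity
  have hK : IsCompact (cubeIcc D) := isCompact_univ_pi fun _ => isCompact_Icc
  have hUC := Metric.uniformContinuousOn_iff.1
    (hK.uniformContinuousOn_of_continuous hgcont.continuousOn)
  -- the key uniform approximation
  have hkey : ∀ ε : ℝ, 0 < ε → ∀ᶠ N in atTop,
      (∀ a c : Fin D → ℝ, IsGoodBox a c →
        |∫ x in clBox a c, g x ∂(ρseq N) - ∫ x in clBox a c, g x ∂ρ| ≤ ε) ∧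
      |∫ x, g x ∂(ρseq N) - ∫ x, g x ∂ρ| ≤ ε := by
    intro ε hε
    set ε₁ : ℝ := ε / 8 with hε₁def
    have hε₁ : 0 < ε₁ := by positivity
    obtain ⟨δ, hδ, hδprop⟩ := hUC ε₁ hε₁
    obtain ⟨n₀, hn₀⟩ := exists_nat_gt (1 / δ)
    set n : ℕ := n₀ + 1 with hndef
    have hn : 0 < n := Nat.succ_pos _
    have hnpos : (0 : ℝ) < n := Nat.cast_pos.2 hn
    have hinv : 1 / (n : ℝ) < δ := by
      rw [div_lt_iff₀ hnpos]
      have h1 : 1 / δ < (n : ℝ) := by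
        have : (n₀ : ℝ) ≤ (n : ℝ) := by exact_mod_cast Nat.le_succ n₀
        linarith
      rw [div_lt_iff₀ hδ] at h1
      linarith [mul_comm δ (n : ℝ)]
    have hgu : ∀ x y : Fin D → ℝ, x ∈ cubeIcc D → y ∈ cubeIcc D →
        (∀ i, |x i - y i| ≤ 1 / n) → |g x - g y| ≤ ε₁ := by
      intro x y hx hy hxy
      have hd : dist x y ≤ 1 / (n : ℝ) := by
        rw [dist_pi_le_iff (by positivity)]
        intro i
        rw [Real.dist_eq]
        exact hxy i
      have := hδprop x hx y hy (lt_of_le_of_lt hd hinv)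
      rw [Real.dist_eq] at this
      exact this.le
    set c0 : ℝ := (D : ℝ) * M.toReal * b with hc0def
    have hc0 : 0 ≤ c0 := by positivity
    set γ : ℝ := min (1/2) (ε / (8 * (c0 + 1))) with hγdef
    have hγ0 : 0 < γ := by
      apply lt_min (by norm_num)
      positivity
    have hγ1 : γ < 1 := lt_of_le_of_lt (min_le_left _ _) (by norm_num)
    have hγb : b * ((D : ℝ) * M.toReal * γ) ≤ ε / 8 := by
      have h1 : γ ≤ ε / (8 * (c0 + 1)) := min_le_right _ _
      have h2 : b * ((D : ℝ) * M.toReal * γ) = c0 * γ := by rw [hc0def]; ring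
      rw [h2]
      calc c0 * γ ≤ c0 * (ε / (8 * (c0 + 1))) := mul_le_mul_of_nonneg_left h1 hc0
        _ ≤ ε / 8 := by
            rw [← mul_div_assoc, div_le_div_iff₀ (by positivity) (by norm_num)]
            nlinarith
    set C : ℝ := (n ^ D : ℝ) * b + b with hCdef
    have hC : 0 ≤ C := by rw [hCdef]; positivity
    have hEsmall : ∀ᶠ N in atTop, extDist (ρseq N) ρ < ε / (4 * (C + 1)) := by
      have hmem : Set.Iio (ε / (4 * (C + 1))) ∈ nhds (0 : ℝ) :=
        isOpen_Iio.mem_nhds (Set.mem_Iio.2 (by positivity))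
      exact hconv.eventually (eventually_mem_set.2 hmem)  -- maybe wrong
    filter_upwards [hEsmall] with N hEN
    have hE0 : 0 ≤ extDist (ρseq N) ρ := extDist_nonneg _ _
    have hEC : C * extDist (ρseq N) ρ ≤ ε / 4 := by
      have h1 : C * extDist (ρseq N) ρ ≤ C * (ε / (4 * (C + 1))) :=
        mul_le_mul_of_nonneg_left hEN.le hC
      calc C * extDist (ρseq N) ρ ≤ C * (ε / (4 * (C + 1))) := h1
        _ ≤ ε / 4 := by
            rw [← mul_div_assoc, div_le_div_iff₀ (by positivity) (by norm_num)]
            nlinarith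
    have hnDb : 0 ≤ (n ^ D : ℝ) * b := by positivity
    constructor
    · intro a c hac
      have hbox := box_integral_diff (ρseq N) ρ hM hρle hgcont hgb hn hgu hac
      have h1 := toReal_prob_le_one (ρseq N) (clBox a c)
      have h2 := toReal_prob_le_one ρ (clBox a c)
      have h3 : (0:ℝ) ≤ ((ρseq N) (clBox a c)).toReal := ENNReal.toReal_nonneg
      have h4 : (0:ℝ) ≤ (ρ (clBox a c)).toReal := ENNReal.toReal_nonneg
      have h5 : (n ^ D : ℝ) * (b * extDist (ρseq N) ρ) ≤ C * extDist (ρseq N) ρ := by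
        rw [hCdef]
        have : ((n ^ D : ℝ) * b + b) * extDist (ρseq N) ρ
            = (n ^ D : ℝ) * (b * extDist (ρseq N) ρ) + b * extDist (ρseq N) ρ := by ring
        rw [this]
        nlinarith
      have h6 : ε₁ * (((ρseq N) (clBox a c)).toReal + (ρ (clBox a c)).toReal) ≤ 2 * ε₁ := by
        nlinarith
      have h7 : 2 * ε₁ = ε / 4 := by rw [hε₁def]; ring
      have h9 : |∫ x in clBox a c, g x ∂(ρseq N) - ∫ x in clBox a c, g x ∂ρ| ≤
          2 * ε₁ + C * extDist (ρseq N) ρ := by linarith [hbox, h5, h6]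
      calc |∫ x in clBox a c, g x ∂(ρseq N) - ∫ x in clBox a c, g x ∂ρ| ≤
          2 * ε₁ + C * extDist (ρseq N) ρ := h9
        _ ≤ ε := by rw [hε₁def] at h7 ⊢; linarith [h7, hEC, hε]
    · have htot := total_integral_diff (ρseq N) ρ hM hρle (hseqc N) hρc hgcont hgb hn hgu hγ0 hγ1
      have h5 : (n ^ D : ℝ) * (b * extDist (ρseq N) ρ) + b * extDist (ρseq N) ρ
          ≤ C * extDist (ρseq N) ρ := by rw [hCdef]; ring_nf; linarith
      have h7 : 2 * ε₁ = ε / 4 := by rw [hε₁def]; ring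
      have h8 : b * ((D : ℝ) * M.toReal * γ + extDist (ρseq N) ρ)
          = b * ((D : ℝ) * M.toReal * γ) + b * extDist (ρseq N) ρ := by ring
      linarith [hγb]
  -- convert withDensity measures to g
  have hwdN : ∀ N, (ρseq N).withDensity (fun x => ENNReal.ofReal (G x)) =
      (ρseq N).withDensity (fun x => ENNReal.ofReal (g x)) := fun N => hwd (ρseq N) (hseqc N)
  have hwdρ : ρ.withDensity (fun x => ENNReal.ofReal (G x)) =
      ρ.withDensity (fun x => ENNReal.ofReal (g x)) := hwd ρ hρc
  -- computation of the normalized measure of a set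
  have hcomp : ∀ (μ' : Measure (Fin D → ℝ)) [IsProbabilityMeasure μ'] (s : Set (Fin D → ℝ)),
      MeasurableSet s → 0 < ∫ x, g x ∂μ' →
      (((ENNReal.ofReal (∫ x, g x ∂μ'))⁻¹ •
          μ'.withDensity fun x => ENNReal.ofReal (g x)) s).toReal =
        (∫ x in s, g x ∂μ') / ∫ x, g x ∂μ' := by
    intro μ' hinst s hs hJ
    have hint : Integrable g μ' := integrable_of_bounded μ' hgcont hgb
    have h1 : (μ'.withDensity fun x => ENNReal.ofReal (g x)) s
        = ∫⁻ x in s, ENNReal.ofReal (g x) ∂μ' := withDensity_apply _ hs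
    have h2 : ∫⁻ x in s, ENNReal.ofReal (g x) ∂μ' = ENNReal.ofReal (∫ x in s, g x ∂μ') :=
      (ofReal_integral_eq_lintegral_ofReal hint.integrableOn
        (ae_of_all _ fun x => hgnn x)).symm
    rw [Measure.smul_apply, smul_eq_mul, h1, h2, ENNReal.toReal_mul, ENNReal.toReal_inv,
      ENNReal.toReal_ofReal hJ.le,
      ENNReal.toReal_ofReal (setIntegral_nonneg hs fun x _ => hgnn x)]
    rw [inv_mul_eq_div]
  constructor
  · -- Part 1
    filter_upwards [hkey (I/2) (by positivity)] with N hN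
    have h1 := (abs_le.1 hN.2).1
    rw [hIμ N]
    have : I/2 ≤ IN N := by
      have := hN.2
      simp only [← hINdef, ← hIdef] at h1 ⊢
      linarith
    show 0 < IN N
    linarith [hIpos]
  · -- Part 2
    rw [Metric.tendsto_atTop]
    intro ε' hε'
    set η : ℝ := min (I/2) (ε' * I / 16) with hηdef
    have hη : 0 < η := lt_min (by positivity) (by positivity)
    obtain ⟨N₀, hN₀⟩ := eventually_atTop.1 (hkey η hη)
    refine ⟨N₀, fun N hN => ?_⟩
    obtain ⟨hNbox, hNtot⟩ := hN₀ N hN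
    have hINlb : I/2 ≤ IN N := by
      have h1 := (abs_le.1 hNtot).1
      have h2 : η ≤ I/2 := min_le_left _ _
      simp only [← hINdef, ← hIdef] at h1
      linarith
    have hINpos : 0 < IN N := lt_of_lt_of_le (by positivity) hINlb
    -- bound the extreme distance of reweighted measures
    have hbound : extDist
        ((ENNReal.ofReal (∫ x, G x ∂(ρseq N)))⁻¹ •
          (ρseq N).withDensity fun x => ENNReal.ofReal (G x))
        ((ENNReal.ofReal (∫ x, G x ∂ρ))⁻¹ •
          ρ.withDensity fun x => ENNReal.ofReal (G x)) ≤ ε' / 4 := by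
      apply extDist_le
      intro a c hac
      have hmeas : MeasurableSet (clBox a c) := measurableSet_clBox a c
      have hcompN := hcomp (ρseq N) (clBox a c) hmeas hINpos
      have hcompρ := hcomp ρ (clBox a c) hmeas hIpos
      rw [hIμ N, hIρ, hwdN N, hwdρ, hcompN, hcompρ]
      -- now a pure real-number estimate
      set A' : ℝ := ∫ x in clBox a c, g x ∂(ρseq N) with hA'def
      set A : ℝ := ∫ x in clBox a c, g x ∂ρ with hAdef
      have hA'N : |A' - A| ≤ η := hNbox a c hac
      have hI'N : |IN N - I| ≤ η := hNtot
      have hAnn : 0 ≤ A := setIntegral_nonneg hmeas fun x _ => hgnn x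
      have hAle : A ≤ I := setIntegral_le_integral (integrable_of_bounded ρ hgcont hgb)
        (ae_of_all _ fun x => hgnn x)
      have hηI : η ≤ ε' * I / 16 := min_le_right _ _
      -- |A'/IN - A/I| ≤ ε'/4
      have hINne : IN N ≠ 0 := ne_of_gt hINpos
      have hIne : I ≠ 0 := ne_of_gt hIpos
      rw [div_sub_div _ _ hINne hIne, abs_div]
      have hnum : |A' * I - IN N * A| ≤ 2 * η * I := by
        have he : A' * I - IN N * A = (A' - A) * I + A * (I - IN N) := by ring
        rw [he]
        have h1 : |(A' - A) * I| ≤ η * I := by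
          rw [abs_mul, abs_of_pos hIpos]
          exact mul_le_mul_of_nonneg_right hA'N hIpos.le
        have h2 : |A * (I - IN N)| ≤ I * η := by
          rw [abs_mul, abs_of_nonneg hAnn]
          have h3 : |I - IN N| ≤ η := by rw [abs_sub_comm]; exact hI'N
          exact mul_le_mul hAle h3 (abs_nonneg _) (by linarith [hIpos])
        have h4 := abs_add_le ((A' - A) * I) (A * (I - IN N))
        linarith
      have hden : |IN N * I| = IN N * I := abs_of_pos (by positivity)
      rw [hden]
      have hdenlb : I/2 * I ≤ IN N * I := mul_le_mul_of_nonneg_right hINlb hIpos.le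
      calc |A' * I - IN N * A| / (IN N * I) ≤ 2 * η * I / (I/2 * I) := by
            apply div_le_div₀ (by positivity) hnum (by positivity) hdenlb
        _ = 4 * η / I := by field_simp; ring
        _ ≤ ε' / 4 := by
            rw [div_le_div_iff₀ hIpos (by norm_num)]
            nlinarith [hηI, hIpos]
    have hnn : 0 ≤ extDist
        ((ENNReal.ofReal (∫ x, G x ∂(ρseq N)))⁻¹ •
          (ρseq N).withDensity fun x => ENNReal.ofReal (G x))
        ((ENNReal.ofReal (∫ x, G x ∂ρ))⁻¹ •
          ρ.withDensity fun x => ENNReal.ofReal (G x)) := extDist_nonneg _ _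
    rw [Real.dist_eq, sub_zero, abs_of_nonneg hnn]
    calc extDist _ _ ≤ ε' / 4 := hbound
      _ < ε' := by linarith
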